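/- If N is a normal subgroup of a finite group G, then k(G) ≤ k(G/N)·k(N), where k(·) denotes the number of conjugacy classes; moreover, equality holds if and only if C_{G/N}(gN) = C_G(g)N/N for every g ∈ G. -/

import Mathlib

open Finset Subgroup

private theorem aux_pairs (H : Type*) [Group H] [Fintype H] :
    Nat.card (ConjClasses H) * Nat.card H =
      ∑ x : H, Nat.card (Subgroup.centralizer ({x} : Set H)) := by
  classical
  rw [← card_comm_eq_card_conjClasses_mul_card]
  have e : { p : H × H // Commute p.1 p.2 } ≃
      (x : H) × (Subgroup.centralizer ({x} : Set H)) :=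
    { toFun := fun p => ⟨p.1.1, ⟨p.1.2, Subgroup.mem_centralizer_singleton_iff.mpr p.2.symm⟩⟩
      invFun := fun s => ⟨(s.1, (s.2 : H)), (Subgroup.mem_centralizer_singleton_iff.mp s.2.2).symm⟩
      left_inv := fun p => rfl
      right_inv := fun s => rfl }
  rw [Nat.card_congr e, Nat.card_eq_fintype_card, Fintype.card_sigma]
  simp [Nat.card_eq_fintype_card]

private theorem aux_decomp {G : Type*} [Group G] [Fintype G] (N : Subgroup G) [N.Normal]
    (H : Subgroup G) :
    Nat.card H =
      Nat.card (N ⊓ H : Subgroup G) * Nat.card (H.map (QuotientGroup.mk' N)) := by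
  classical
  set f := (QuotientGroup.mk' N).comp H.subtype with hf
  have hker : f.ker = N.subgroupOf H := by
    rw [hf, ← MonoidHom.comap_ker, QuotientGroup.ker_mk']; rfl
  have hrange : f.range = H.map (QuotientGroup.mk' N) := by
    rw [hf, MonoidHom.range_comp, Subgroup.range_subtype]
  calc Nat.card H = Nat.card (H ⧸ f.ker) * Nat.card f.ker :=
        Subgroup.card_eq_card_quotient_mul_card_subgroup f.ker
    _ = Nat.card f.range * Nat.card f.ker := by
        rw [Nat.card_congr (QuotientGroup.quotientKerEquivRange f).toEquiv]
    _ = Nat.card (N ⊓ H : Subgroup G) * Nat.card (H.map (QuotientGroup.mk' N)) := by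
        rw [hrange, hker, mul_comm, ← Subgroup.inf_subgroupOf_right N H,
          Nat.card_congr (Subgroup.subgroupOfEquivOfLe inf_le_right).toEquiv]

theorem card_conjClasses_le_mul_and_eq_iff
    (G : Type*) [Group G] [Finite G] (N : Subgroup G) [N.Normal] :
    Nat.card (ConjClasses G) ≤
        Nat.card (ConjClasses (G ⧸ N)) * Nat.card (ConjClasses N) ∧
      (Nat.card (ConjClasses G) =
          Nat.card (ConjClasses (G ⧸ N)) * Nat.card (ConjClasses N) ↔
        ∀ g : G,
          Subgroup.centralizer {((g : G ⧸ N))} =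
            (Subgroup.centralizer {g}).map (QuotientGroup.mk' N)) := by
  classical
  have _i1 : Fintype G := Fintype.ofFinite G
  have _i2 : Fintype (G ⧸ N) := Fintype.ofFinite _
  -- basic counts
  have h1 : Nat.card (ConjClasses G) * Nat.card G
      = ∑ x : G, Nat.card (Subgroup.centralizer ({x} : Set G)) := aux_pairs G
  have hq : Nat.card (ConjClasses (G ⧸ N)) * Nat.card (G ⧸ N)
      = ∑ q : G ⧸ N, Nat.card (Subgroup.centralizer ({q} : Set (G ⧸ N))) := aux_pairs _
  have h2 : ∀ x : G, Nat.card (Subgroup.centralizer ({x} : Set G))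
      = Nat.card (N ⊓ Subgroup.centralizer ({x} : Set G) : Subgroup G) *
        Nat.card ((Subgroup.centralizer ({x} : Set G)).map (QuotientGroup.mk' N)) :=
    fun x => aux_decomp N _
  -- image of centralizer is contained in centralizer of image
  have hle0 : ∀ x : G, ((Subgroup.centralizer ({x} : Set G)).map (QuotientGroup.mk' N))
      ≤ Subgroup.centralizer ({((x : G ⧸ N))} : Set (G ⧸ N)) := by
    intro x q hq'
    rw [Subgroup.mem_map] at hq'
    obtain ⟨y, hy, rfl⟩ := hq'
    rw [Subgroup.mem_centralizer_singleton_iff] at hy ⊢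
    show ((QuotientGroup.mk' N) y) * ((x : G ⧸ N)) = ((x : G ⧸ N)) * ((QuotientGroup.mk' N) y)
    have : ((QuotientGroup.mk' N) (y * x)) = ((QuotientGroup.mk' N) (x * y)) := by rw [hy]
    simpa [map_mul] using this
  -- conversions to Finset counts
  have hcinf : ∀ x : G, Nat.card (N ⊓ Subgroup.centralizer ({x} : Set G) : Subgroup G)
      = (univ.filter fun y : G => y ∈ N ∧ y * x = x * y).card := by
    intro x
    rw [Nat.card_congr (Equiv.subtypeEquivRight (q := fun y : G => y ∈ N ∧ y * x = x * y)
      (fun y => by simp [Subgroup.mem_inf, Subgroup.mem_centralizer_singleton_iff]))]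
    rw [Nat.card_eq_fintype_card, Fintype.card_subtype]
  have hnc : ∀ m : N, Nat.card (Subgroup.centralizer ({m} : Set N))
      = (univ.filter fun y : G => y ∈ N ∧ y * (m : G) = (m : G) * y).card := by
    intro m
    have e : {n : N // n ∈ Subgroup.centralizer ({m} : Set N)}
        ≃ {y : G // y ∈ N ∧ y * (m : G) = (m : G) * y} :=
      { toFun := fun n => ⟨(n : N), (n : N).2, by
          have := Subgroup.mem_centralizer_singleton_iff.mp n.2
          exact_mod_cast congrArg (Subtype.val) this⟩
        invFun := fun y => ⟨⟨y.1, y.2.1⟩, Subgroup.mem_centralizer_singleton_iff.mpr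
          (Subtype.ext (by exact y.2.2))⟩
        left_inv := fun n => rfl
        right_inv := fun y => rfl }
    rw [Nat.card_congr e, Nat.card_eq_fintype_card, Fintype.card_subtype]
  have hnsum : Nat.card (ConjClasses N) * Nat.card N
      = ∑ y ∈ univ.filter (fun y : G => y ∈ N),
          (univ.filter fun z : G => z ∈ N ∧ z * y = y * z).card := by
    rw [aux_pairs N,
      Finset.sum_subtype (p := fun y : G => y ∈ N) (univ.filter (fun y : G => y ∈ N)) (by simp)
        (fun y => (univ.filter fun z : G => z ∈ N ∧ z * y = y * z).card)]
    exact Finset.sum_congr rfl fun m _ => hnc m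
  -- swap the double count over a fiber
  have keyswap : ∀ q : G ⧸ N,
      ∑ x ∈ univ.filter (fun x : G => ((x : G ⧸ N)) = q),
          (univ.filter fun y : G => y ∈ N ∧ y * x = x * y).card
      = ∑ y ∈ univ.filter (fun y : G => y ∈ N),
          ((univ.filter (fun x : G => ((x : G ⧸ N)) = q)).filter
            fun x => y * x = x * y).card := by
    intro q
    simp only [Finset.card_filter]
    rw [Finset.sum_comm]
    rw [Finset.sum_filter]
    refine Finset.sum_congr rfl fun y _ => ?_
    by_cases hy : y ∈ N <;> simp [hy]
  -- per-element comparison, inequality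
  have comp_le : ∀ (q : G ⧸ N) (y : G),
      ((univ.filter (fun x : G => ((x : G ⧸ N)) = q)).filter fun x => y * x = x * y).card
        ≤ (univ.filter fun z : G => z ∈ N ∧ z * y = y * z).card := by
    intro q y
    rcases ((univ.filter (fun x : G => ((x : G ⧸ N)) = q)).filter
        fun x => y * x = x * y).eq_empty_or_nonempty with he | ⟨c, hc⟩
    · simp [he]
    · simp only [Finset.mem_filter, Finset.mem_univ, true_and] at hc
      apply Finset.card_le_card_of_injOn (fun x => c⁻¹ * x)
      · intro x hx
        simp only [Finset.mem_coe, Finset.mem_filter, Finset.mem_univ, true_and] at hx ⊢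
        refine ⟨?_, ?_⟩
        · rw [← QuotientGroup.eq_one_iff]
          show ((c⁻¹ * x : G) : G ⧸ N) = 1
          rw [QuotientGroup.mk_mul, QuotientGroup.mk_inv, hx.1, hc.1, inv_mul_cancel]
        · have hcy : Commute c y := (show Commute y c from hc.2).symm
          exact Commute.mul_left hcy.inv_left ((show Commute y x from hx.2).symm)
      · intro a _ b _ hab; exact mul_left_cancel hab
  -- per-element comparison, equality given a commuting coset representative
  have comp_eq : ∀ (q : G ⧸ N) (y : G), y ∈ N →
      (∃ c : G, ((c : G ⧸ N)) = q ∧ y * c = c * y) →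
      ((univ.filter (fun x : G => ((x : G ⧸ N)) = q)).filter fun x => y * x = x * y).card
        = (univ.filter fun z : G => z ∈ N ∧ z * y = y * z).card := by
    intro q y _hy ⟨c, hcq, hcy⟩
    refine le_antisymm (comp_le q y) ?_
    apply Finset.card_le_card_of_injOn (fun z => c * z)
    · intro z hz
      simp only [Finset.mem_coe, Finset.mem_filter, Finset.mem_univ, true_and] at hz ⊢
      refine ⟨?_, ?_⟩
      · show ((c * z : G) : G ⧸ N) = q
        rw [QuotientGroup.mk_mul, (QuotientGroup.eq_one_iff z).mpr hz.1, mul_one, hcq]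
      · exact Commute.mul_right (show Commute y c from hcy)
          ((show Commute z y from hz.2).symm)
    · intro a _ b _ hab; exact mul_left_cancel hab
  -- fiber sums
  have fiber_le : ∀ q : G ⧸ N,
      ∑ x ∈ univ.filter (fun x : G => ((x : G ⧸ N)) = q),
          Nat.card (N ⊓ Subgroup.centralizer ({x} : Set G) : Subgroup G)
        ≤ Nat.card (ConjClasses N) * Nat.card N := by
    intro q
    calc ∑ x ∈ univ.filter (fun x : G => ((x : G ⧸ N)) = q),
          Nat.card (N ⊓ Subgroup.centralizer ({x} : Set G) : Subgroup G)
        = ∑ x ∈ univ.filter (fun x : G => ((x : G ⧸ N)) = q),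
            (univ.filter fun y : G => y ∈ N ∧ y * x = x * y).card :=
          Finset.sum_congr rfl fun x _ => hcinf x
      _ = ∑ y ∈ univ.filter (fun y : G => y ∈ N),
            ((univ.filter (fun x : G => ((x : G ⧸ N)) = q)).filter
              fun x => y * x = x * y).card := keyswap q
      _ ≤ ∑ y ∈ univ.filter (fun y : G => y ∈ N),
            (univ.filter fun z : G => z ∈ N ∧ z * y = y * z).card :=
          Finset.sum_le_sum fun y _ => comp_le q y
      _ = Nat.card (ConjClasses N) * Nat.card N := hnsum.symm
  have fiber_eq : (∀ g : G, Subgroup.centralizer {((g : G ⧸ N))} =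
        (Subgroup.centralizer {g}).map (QuotientGroup.mk' N)) → ∀ q : G ⧸ N,
      ∑ x ∈ univ.filter (fun x : G => ((x : G ⧸ N)) = q),
          Nat.card (N ⊓ Subgroup.centralizer ({x} : Set G) : Subgroup G)
        = Nat.card (ConjClasses N) * Nat.card N := by
    intro P q
    calc ∑ x ∈ univ.filter (fun x : G => ((x : G ⧸ N)) = q),
          Nat.card (N ⊓ Subgroup.centralizer ({x} : Set G) : Subgroup G)
        = ∑ x ∈ univ.filter (fun x : G => ((x : G ⧸ N)) = q),
            (univ.filter fun y : G => y ∈ N ∧ y * x = x * y).card :=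
          Finset.sum_congr rfl fun x _ => hcinf x
      _ = ∑ y ∈ univ.filter (fun y : G => y ∈ N),
            ((univ.filter (fun x : G => ((x : G ⧸ N)) = q)).filter
              fun x => y * x = x * y).card := keyswap q
      _ = ∑ y ∈ univ.filter (fun y : G => y ∈ N),
            (univ.filter fun z : G => z ∈ N ∧ z * y = y * z).card := by
          refine Finset.sum_congr rfl fun y hy => ?_
          rw [Finset.mem_filter] at hy
          apply comp_eq q y hy.2
          have h1 : ((y : G ⧸ N)) = 1 := (QuotientGroup.eq_one_iff y).mpr hy.2
          have hPy := P y
          rw [h1] at hPy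
          have hqmem : q ∈ Subgroup.centralizer ({(1 : G ⧸ N)} : Set (G ⧸ N)) :=
            Subgroup.mem_centralizer_singleton_iff.mpr (by rw [mul_one, one_mul])
          rw [hPy, Subgroup.mem_map] at hqmem
          obtain ⟨c, hc, hcq⟩ := hqmem
          exact ⟨c, hcq, (Subgroup.mem_centralizer_singleton_iff.mp hc).symm⟩
      _ = Nat.card (ConjClasses N) * Nat.card N := hnsum.symm
  -- the main chain
  have hT1 : Nat.card (ConjClasses G) * Nat.card G
      = ∑ x : G, Nat.card (N ⊓ Subgroup.centralizer ({x} : Set G) : Subgroup G) *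
          Nat.card ((Subgroup.centralizer ({x} : Set G)).map (QuotientGroup.mk' N)) :=
    h1.trans (Finset.sum_congr rfl fun x _ => h2 x)
  have hT12 : ∑ x : G, Nat.card (N ⊓ Subgroup.centralizer ({x} : Set G) : Subgroup G) *
          Nat.card ((Subgroup.centralizer ({x} : Set G)).map (QuotientGroup.mk' N))
      ≤ ∑ x : G, Nat.card (N ⊓ Subgroup.centralizer ({x} : Set G) : Subgroup G) *
          Nat.card (Subgroup.centralizer ({((x : G ⧸ N))} : Set (G ⧸ N))) :=
    Finset.sum_le_sum fun x _ =>
      Nat.mul_le_mul_left _ (Subgroup.card_le_of_le (hle0 x))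
  have hT2 : ∑ x : G, Nat.card (N ⊓ Subgroup.centralizer ({x} : Set G) : Subgroup G) *
          Nat.card (Subgroup.centralizer ({((x : G ⧸ N))} : Set (G ⧸ N)))
      = ∑ q : G ⧸ N, (∑ x ∈ univ.filter (fun x : G => ((x : G ⧸ N)) = q),
          Nat.card (N ⊓ Subgroup.centralizer ({x} : Set G) : Subgroup G)) *
            Nat.card (Subgroup.centralizer ({q} : Set (G ⧸ N))) := by
    rw [← Finset.sum_fiberwise univ (fun x : G => ((x : G ⧸ N)))
      (fun x => Nat.card (N ⊓ Subgroup.centralizer ({x} : Set G) : Subgroup G) *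
        Nat.card (Subgroup.centralizer ({((x : G ⧸ N))} : Set (G ⧸ N))))]
    refine Finset.sum_congr rfl fun q _ => ?_
    rw [Finset.sum_mul]
    refine Finset.sum_congr rfl fun x hx => ?_
    rw [(Finset.mem_filter.mp hx).2]
  have hQtot : ∑ q : G ⧸ N, (Nat.card (ConjClasses N) * Nat.card N) *
        Nat.card (Subgroup.centralizer ({q} : Set (G ⧸ N)))
      = Nat.card (ConjClasses (G ⧸ N)) * Nat.card (ConjClasses N) * Nat.card G := by
    rw [← Finset.mul_sum, ← hq, Subgroup.card_eq_card_quotient_mul_card_subgroup N]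
    ring
  have hGpos : 0 < Nat.card G := Nat.card_pos
  have main_le : Nat.card (ConjClasses G) * Nat.card G
      ≤ Nat.card (ConjClasses (G ⧸ N)) * Nat.card (ConjClasses N) * Nat.card G := by
    rw [hT1]
    refine le_trans hT12 ?_
    rw [hT2, ← hQtot]
    exact Finset.sum_le_sum fun q _ => Nat.mul_le_mul_right _ (fiber_le q)
  refine ⟨Nat.le_of_mul_le_mul_right main_le hGpos, ?_, ?_⟩
  · -- equality implies centralizer condition
    intro hEq
    have hTeq : ∑ x : G, Nat.card (N ⊓ Subgroup.centralizer ({x} : Set G) : Subgroup G) *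
          Nat.card ((Subgroup.centralizer ({x} : Set G)).map (QuotientGroup.mk' N))
        = ∑ x : G, Nat.card (N ⊓ Subgroup.centralizer ({x} : Set G) : Subgroup G) *
          Nat.card (Subgroup.centralizer ({((x : G ⧸ N))} : Set (G ⧸ N))) := by
      refine le_antisymm hT12 ?_
      calc ∑ x : G, Nat.card (N ⊓ Subgroup.centralizer ({x} : Set G) : Subgroup G) *
              Nat.card (Subgroup.centralizer ({((x : G ⧸ N))} : Set (G ⧸ N)))
          ≤ Nat.card (ConjClasses (G ⧸ N)) * Nat.card (ConjClasses N) * Nat.card G := by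
            rw [hT2, ← hQtot]
            exact Finset.sum_le_sum fun q _ => Nat.mul_le_mul_right _ (fiber_le q)
        _ = Nat.card (ConjClasses G) * Nat.card G := by rw [hEq]
        _ = _ := hT1
    have hterm := (Finset.sum_eq_sum_iff_of_le (fun x _ =>
      Nat.mul_le_mul_left _ (Subgroup.card_le_of_le (hle0 x)))).mp hTeq
    intro g
    have hx := hterm g (Finset.mem_univ g)
    have hpos : 0 < Nat.card (N ⊓ Subgroup.centralizer ({g} : Set G) : Subgroup G) :=
      Nat.card_pos
    have himeq := Nat.eq_of_mul_eq_mul_left hpos hx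
    exact (Subgroup.eq_of_le_of_card_ge (hle0 g) (le_of_eq himeq.symm)).symm
  · -- centralizer condition implies equality
    intro P
    have main_eq : Nat.card (ConjClasses G) * Nat.card G
        = Nat.card (ConjClasses (G ⧸ N)) * Nat.card (ConjClasses N) * Nat.card G := by
      rw [hT1]
      calc ∑ x : G, Nat.card (N ⊓ Subgroup.centralizer ({x} : Set G) : Subgroup G) *
              Nat.card ((Subgroup.centralizer ({x} : Set G)).map (QuotientGroup.mk' N))
          = ∑ x : G, Nat.card (N ⊓ Subgroup.centralizer ({x} : Set G) : Subgroup G) *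
              Nat.card (Subgroup.centralizer ({((x : G ⧸ N))} : Set (G ⧸ N))) := by
            refine Finset.sum_congr rfl fun x _ => ?_
            rw [P x]
        _ = ∑ q : G ⧸ N, (∑ x ∈ univ.filter (fun x : G => ((x : G ⧸ N)) = q),
              Nat.card (N ⊓ Subgroup.centralizer ({x} : Set G) : Subgroup G)) *
                Nat.card (Subgroup.centralizer ({q} : Set (G ⧸ N))) := hT2
        _ = ∑ q : G ⧸ N, (Nat.card (ConjClasses N) * Nat.card N) *
                Nat.card (Subgroup.centralizer ({q} : Set (G ⧸ N))) := by
            refine Finset.sum_congr rfl fun q _ => ?_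
            rw [fiber_eq P q]
        _ = _ := hQtot
    exact Nat.eq_of_mul_eq_mul_right hGpos main_eq
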